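/- Let m ≥ 2 and k ≥ 1 be natural numbers. For u, v ∈ ℂ^m and w ∈ ℂ^k (as Euclidean spaces EuclideanSpace ℂ (Fin m) and EuclideanSpace ℂ (Fin k)), write u ⊗ v ⊗ w for the element of EuclideanSpace ℂ (Fin m × Fin m × Fin k) given by (i, j, l) ↦ u i · v j · w l. Then there do not exist vectors b ∈ ℂ^m with ‖b‖ = 1 and r ∈ ℂ^k with ‖r‖ = 1 and a ℂ-linear isometric equivalence U of EuclideanSpace ℂ (Fin m × Fin m × Fin k) onto itself such that for every ψ ∈ ℂ^m with ‖ψ‖ = 1 there exists r' ∈ ℂ^k with U(ψ ⊗ b ⊗ r) = ψ ⊗ ψ ⊗ r'. -/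

import Mathlib

/-- The elementary tensor `u ⊗ v ⊗ w` in `ℂ^m ⊗ ℂ^m ⊗ ℂ^k`, realized concretely in
`EuclideanSpace ℂ (Fin m × Fin m × Fin k)`. -/
def tensor3 {m k : ℕ} (u v : EuclideanSpace ℂ (Fin m)) (w : EuclideanSpace ℂ (Fin k)) :
    EuclideanSpace ℂ (Fin m × Fin m × Fin k) :=
  WithLp.toLp 2 (fun p : Fin m × Fin m × Fin k => u p.1 * v p.2.1 * w p.2.2)

/-- The quantum no-cloning theorem: for `m ≥ 2`, there is no unitary `U` on
`ℂ^m ⊗ ℂ^m ⊗ ℂ^k` and unit vectors `b`, `r` such that `U (ψ ⊗ b ⊗ r) = ψ ⊗ ψ ⊗ r'`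
for every unit state `ψ`. -/
theorem quantum_no_cloning (m k : ℕ) (hm : 2 ≤ m) (hk : 1 ≤ k) :
    ¬ ∃ (b : EuclideanSpace ℂ (Fin m)) (r : EuclideanSpace ℂ (Fin k))
        (U : EuclideanSpace ℂ (Fin m × Fin m × Fin k) ≃ₗᵢ[ℂ]
             EuclideanSpace ℂ (Fin m × Fin m × Fin k)),
      ‖b‖ = 1 ∧ ‖r‖ = 1 ∧
      ∀ ψ : EuclideanSpace ℂ (Fin m), ‖ψ‖ = 1 →
        ∃ r' : EuclideanSpace ℂ (Fin k), U (tensor3 ψ b r) = tensor3 ψ ψ r' := by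
  rintro ⟨b, r, U, hb, hr, H⟩
  set i0 : Fin m := ⟨0, by omega⟩ with hi0
  set i1 : Fin m := ⟨1, by omega⟩ with hi1
  have hne : i0 ≠ i1 := by simp [hi0, hi1, Fin.ext_iff]
  set e0 : EuclideanSpace ℂ (Fin m) := EuclideanSpace.single i0 (1 : ℂ) with he0def
  set e1 : EuclideanSpace ℂ (Fin m) := EuclideanSpace.single i1 (1 : ℂ) with he1def
  have he0 : ‖e0‖ = 1 := by simp [he0def]
  have he1 : ‖e1‖ = 1 := by simp [he1def]
  have he0at1 : e0 i1 = 0 := by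
    simp [he0def, EuclideanSpace.single_apply, hne.symm]
  have he1at0 : e1 i0 = 0 := by
    simp [he1def, EuclideanSpace.single_apply, hne]
  have he0at0 : e0 i0 = 1 := by simp [he0def, EuclideanSpace.single_apply]
  have he1at1 : e1 i1 = 1 := by simp [he1def, EuclideanSpace.single_apply]
  have hinner : (inner ℂ e0 e1 : ℂ) = 0 := by
    simp [he0def, EuclideanSpace.inner_single_left, he1at0]
  have hsum : ‖e0 + e1‖ = Real.sqrt 2 := by
    have h2 : ‖e0 + e1‖ ^ 2 = 2 := by
      rw [@norm_add_sq ℂ]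
      simp [he0, he1, hinner]
      norm_num
    have : ‖e0 + e1‖ = Real.sqrt (‖e0 + e1‖ ^ 2) := by
      rw [Real.sqrt_sq (norm_nonneg _)]
    rw [this, h2]
  set a : ℂ := ((Real.sqrt 2 : ℝ) : ℂ)⁻¹ with hadef
  have ha : a ≠ 0 := by
    simp [hadef]
  set ψ : EuclideanSpace ℂ (Fin m) := a • (e0 + e1) with hψdef
  have hψ : ‖ψ‖ = 1 := by
    rw [hψdef, norm_smul, hsum, hadef, norm_inv, Complex.norm_real,
      Real.norm_eq_abs, abs_of_pos (by positivity)]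
    rw [inv_mul_cancel₀ (by positivity)]
  obtain ⟨r0, hr0⟩ := H e0 he0
  obtain ⟨r1, hr1⟩ := H e1 he1
  obtain ⟨r2, hr2⟩ := H ψ hψ
  have hlin : tensor3 ψ b r = a • (tensor3 e0 b r + tensor3 e1 b r) := by
    ext p
    show ψ p.1 * b p.2.1 * r p.2.2 = a * (tensor3 e0 b r p + tensor3 e1 b r p)
    show ψ p.1 * b p.2.1 * r p.2.2
        = a * (e0 p.1 * b p.2.1 * r p.2.2 + e1 p.1 * b p.2.1 * r p.2.2)
    have : ψ p.1 = a * (e0 p.1 + e1 p.1) := rfl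
    rw [this]; ring
  have key : tensor3 ψ ψ r2 = a • (tensor3 e0 e0 r0 + tensor3 e1 e1 r1) := by
    rw [← hr2, hlin, map_smul, map_add, hr0, hr1]
  have hψ0 : ψ i0 = a := by
    show a * (e0 i0 + e1 i0) = a
    rw [he0at0, he1at0]; ring
  have hψ1 : ψ i1 = a := by
    show a * (e0 i1 + e1 i1) = a
    rw [he0at1, he1at1]; ring
  have hr2zero : r2 = 0 := by
    ext l
    have h := congrFun (congrArg WithLp.ofLp key) (i0, i1, l)
    have hL : tensor3 ψ ψ r2 (i0, i1, l) = a * a * r2 l := by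
      show ψ i0 * ψ i1 * r2 l = a * a * r2 l
      rw [hψ0, hψ1]
    have hR : (a • (tensor3 e0 e0 r0 + tensor3 e1 e1 r1)) (i0, i1, l) = 0 := by
      show a * (tensor3 e0 e0 r0 (i0, i1, l) + tensor3 e1 e1 r1 (i0, i1, l)) = 0
      show a * (e0 i0 * e0 i1 * r0 l + e1 i0 * e1 i1 * r1 l) = 0
      rw [he0at1, he1at0]; ring
    rw [hL, hR] at h
    have := mul_eq_zero.mp h
    rcases this with h' | h'
    · exact absurd h' (mul_ne_zero ha ha)
    · exact h'
  have hz : tensor3 ψ b r = 0 := by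
    apply U.injective
    rw [hr2, map_zero, hr2zero]
    ext p
    show ψ p.1 * ψ p.2.1 * (0 : EuclideanSpace ℂ (Fin k)) p.2.2 = 0
    simp
  obtain ⟨j, hj⟩ : ∃ j, b j ≠ 0 := by
    by_contra h
    push_neg at h
    have : b = 0 := by ext i; exact h i
    rw [this, norm_zero] at hb; norm_num at hb
  obtain ⟨l, hl⟩ : ∃ l, r l ≠ 0 := by
    by_contra h
    push_neg at h
    have : r = 0 := by ext i; exact h i
    rw [this, norm_zero] at hr; norm_num at hr
  have h := congrFun (congrArg WithLp.ofLp hz) (i0, j, l)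
  have : ψ i0 * b j * r l = 0 := h
  rw [hψ0] at this
  rcases mul_eq_zero.mp this with h' | h'
  · rcases mul_eq_zero.mp h' with h'' | h''
    · exact ha h''
    · exact hj h''
  · exact hl h'
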